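/- For the MDS-coded scheme with K nodes, storage fraction μ ∈ [1/K, 1], m rows, per-computation time τ > 0, rate-η exponential setup times, and communication weight γ ≥ 0, the average total normalized latency equals (H_K - H_{K-⌈1/μ⌉})/(η·τ) + m·(μ + γ). -/

import Mathlib

open MeasureTheory ProbabilityTheory

/-- The `q`-th smallest value (1-indexed) among `f 0, …, f (K-1)`. -/
noncomputable def orderStat {K : ℕ} (f : Fin K → ℝ) (q : ℕ) : ℝ :=
  ((List.ofFn f).insertionSort (· ≤ ·)).getD (q - 1) 0

open Finset Real Set
open scoped ENNReal NNReal

section Aux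

-- L1: sorted list getD vs countP
lemma sorted_getD_le_iff {w : List ℝ} (hw : w.Pairwise (· ≤ ·)) :
    ∀ {j : ℕ}, j < w.length → ∀ t : ℝ,
    (w.getD j 0 ≤ t ↔ j + 1 ≤ w.countP (fun x => decide (x ≤ t))) := by
  induction w with
  | nil => intro j hj; simp at hj
  | cons a l ih =>
    intro j hj t
    rw [List.pairwise_cons] at hw
    obtain ⟨ha, hl⟩ := hw
    rw [List.countP_cons]
    match j with
    | 0 =>
      simp only [List.getD_cons_zero]
      constructor
      · intro h; simp [h]
      · intro h
        by_contra hat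
        rw [if_neg (by simpa using hat)] at h
        simp only [add_zero] at h
        have : ∃ x ∈ l, x ≤ t := by
          have := List.countP_pos_iff.mp (show 0 < l.countP (fun x => decide (x ≤ t)) by omega)
          simpa using this
        obtain ⟨x, hx, hxt⟩ := this
        exact hat ((ha x hx).trans hxt)
    | j + 1 =>
      simp only [List.getD_cons_succ]
      simp only [List.length_cons] at hj
      have hj' : j < l.length := by omega
      by_cases hat : a ≤ t
      · rw [if_pos (by simpa using hat)]
        rw [ih hl hj' t]; omega
      · rw [if_neg (by simpa using hat)]
        have hc0 : l.countP (fun x => decide (x ≤ t)) = 0 := by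
          rw [List.countP_eq_zero]
          intro x hx
          simp only [decide_eq_true_eq]
          intro hxt; exact hat ((ha x hx).trans hxt)
        constructor
        · intro h
          exfalso
          have : l.getD j 0 ∈ l := by
            rw [List.getD_eq_getElem l 0 hj']; exact List.getElem_mem _
          exact hat ((ha _ this).trans h)
        · intro h; omega

lemma countP_ofFn {K : ℕ} (f : Fin K → ℝ) (t : ℝ) :
    (List.ofFn f).countP (fun x => decide (x ≤ t))
      = (Finset.univ.filter (fun i => f i ≤ t)).card := by
  rw [List.ofFn_eq_map, List.countP_map, List.countP_eq_length_filter]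
  rw [Fin.univ_def]
  simp only [Finset.filter, Finset.card_mk, Multiset.filter_coe, Multiset.coe_card]
  congr 1

lemma orderStat_le_iff {K : ℕ} (f : Fin K → ℝ) {q : ℕ} (hq1 : 1 ≤ q) (hqK : q ≤ K) (t : ℝ) :
    orderStat f q ≤ t ↔ q ≤ (Finset.univ.filter (fun i => f i ≤ t)).card := by
  have hperm : ((List.ofFn f).insertionSort (· ≤ ·)).Perm (List.ofFn f) :=
    List.perm_insertionSort _ _
  have hlen : ((List.ofFn f).insertionSort (· ≤ ·)).length = K := by
    rw [hperm.length_eq, List.length_ofFn]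
  have hsorted := List.pairwise_insertionSort (· ≤ ·) (List.ofFn f)
  rw [orderStat, sorted_getD_le_iff hsorted (by omega) t, hperm.countP_eq, countP_ofFn]
  omega

lemma orderStat_mem {K : ℕ} (f : Fin K → ℝ) {q : ℕ} (hq1 : 1 ≤ q) (hqK : q ≤ K) :
    ∃ k, orderStat f q = f k := by
  have hperm : ((List.ofFn f).insertionSort (· ≤ ·)).Perm (List.ofFn f) :=
    List.perm_insertionSort _ _
  have hlen : ((List.ofFn f).insertionSort (· ≤ ·)).length = K := by
    rw [hperm.length_eq, List.length_ofFn]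
  have hmem : orderStat f q ∈ (List.ofFn f).insertionSort (· ≤ ·) := by
    rw [orderStat, List.getD_eq_getElem _ 0 (by omega)]
    exact List.getElem_mem _
  have := hperm.mem_iff.mp hmem
  rw [List.mem_ofFn] at this
  obtain ⟨k, hk⟩ := this
  exact ⟨k, hk.symm⟩

lemma ascFactorial_prod (n : ℕ) : ∀ k : ℕ, n.ascFactorial k = ∏ i ∈ range k, (n + i)
  | 0 => by simp
  | k + 1 => by
    rw [Nat.ascFactorial_succ, prod_range_succ, ascFactorial_prod n k, mul_comm]

lemma nat_comb_id {K j : ℕ} (hj : j < K) :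
    K.choose j * j.factorial * (K - j) = (K - j).ascFactorial (j + 1) := by
  have hn : 0 < K - j := by omega
  have h1 : (K - j - 1).factorial * (K - j).ascFactorial (j + 1) = K.factorial := by
    have h := Nat.factorial_mul_ascFactorial' (K - j) (j + 1) hn
    rwa [show K - j + (j+1) - 1 = K by omega] at h
  have h2 : K.choose j * j.factorial * (K - j).factorial = K.factorial :=
    Nat.choose_mul_factorial_mul_factorial hj.le
  have h3 : (K - j) * (K - j - 1).factorial = (K - j).factorial := Nat.mul_factorial_pred hn.ne'
  have h4 : (K.choose j * j.factorial * (K - j)) * (K - j - 1).factorial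
      = ((K - j).ascFactorial (j + 1)) * (K - j - 1).factorial := by
    calc (K.choose j * j.factorial * (K - j)) * (K - j - 1).factorial
        = K.choose j * j.factorial * ((K - j) * (K - j - 1).factorial) := by ring
      _ = K.factorial := by rw [h3, h2]
      _ = _ := by rw [← h1]; ring
  exact Nat.eq_of_mul_eq_mul_right (Nat.factorial_pos _) h4

lemma comb_real {K j : ℕ} (hj : j < K) (η : ℝ) (hη : 0 < η) :
    (K.choose j : ℝ) * ((j.factorial : ℝ) / (η * ∏ i ∈ range (j+1), (((K-j : ℕ) : ℝ) + i)))
      = 1 / (((K-j : ℕ) : ℝ) * η) := by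
  have hprod : ∏ i ∈ range (j+1), (((K-j : ℕ) : ℝ) + i) = ((K - j).ascFactorial (j+1) : ℝ) := by
    rw [ascFactorial_prod, Nat.cast_prod]
    exact Finset.prod_congr rfl fun i _ => by push_cast; ring
  rw [hprod]
  have hkey : (K.choose j : ℝ) * j.factorial * ((K - j : ℕ) : ℝ) = ((K - j).ascFactorial (j+1) : ℝ) := by
    exact_mod_cast congrArg (Nat.cast (R := ℝ)) (nat_comb_id hj)
  have hKj : (0:ℝ) < ((K - j : ℕ) : ℝ) := by
    have : 0 < K - j := by omega
    exact_mod_cast this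
  have hasc : (0:ℝ) < ((K - j).ascFactorial (j+1) : ℝ) := by
    rw [← hkey]
    have : 0 < K.choose j := Nat.choose_pos hj.le
    have := Nat.factorial_pos j
    positivity
  field_simp
  nlinarith [hkey]

lemma harmonic_diff {K q : ℕ} (hq : q ≤ K) :
    ((harmonic K : ℝ)) - ((harmonic (K - q) : ℝ)) = ∑ j ∈ range q, 1 / (((K - j : ℕ) : ℝ)) := by
  induction q with
  | zero => simp
  | succ q ih =>
    have hq' : q ≤ K := by omega
    rw [Finset.sum_range_succ, ← ih hq']
    have h1 : K - q = (K - (q+1)) + 1 := by omega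
    have h2 : harmonic (K - q) = harmonic (K - (q+1)) + ((K - q : ℕ) : ℚ)⁻¹ := by
      conv_lhs => rw [h1]
      rw [harmonic_succ, show K - (q+1) + 1 = K - q from by omega]
    rw [h2]
    push_cast
    ring

lemma J_integrable {η : ℝ} (hη : 0 < η) (j : ℕ) {c : ℝ} (hc : 0 < c) :
    IntegrableOn (fun t : ℝ => (1 - exp (-(η*t)))^j * exp (-(c*η*t))) (Ioi 0) := by
  have hint : IntegrableOn (fun t : ℝ => exp (-(c*η) * t)) (Ioi 0) :=
    exp_neg_integrableOn_Ioi 0 (by positivity)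
  refine Integrable.mono hint ?_ ?_
  · exact (Continuous.aestronglyMeasurable (by continuity))
  · filter_upwards [ae_restrict_mem measurableSet_Ioi] with t ht
    rw [Set.mem_Ioi] at ht
    have h1 : 0 ≤ 1 - exp (-(η*t)) := by
      have : exp (-(η*t)) ≤ 1 := exp_le_one_iff.mpr (by nlinarith)
      linarith
    have h2 : 1 - exp (-(η*t)) ≤ 1 := by linarith [(exp_pos (-(η*t))).le]
    rw [Real.norm_eq_abs, Real.norm_eq_abs, abs_of_nonneg (by positivity),
      abs_of_nonneg (exp_pos _).le]
    have : exp (-(c*η*t)) = exp (-(c*η)*t) := by ring_nf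
    rw [this]
    nlinarith [(pow_le_one₀ h1 h2 : (1 - rexp (-(η*t)))^j ≤ 1), (exp_pos (-(c*η)*t)).le, pow_nonneg h1 j]

lemma J_eq {η : ℝ} (hη : 0 < η) : ∀ (j : ℕ) {c : ℝ}, 0 < c →
    ∫ t in Ioi (0:ℝ), (1 - exp (-(η*t)))^j * exp (-(c*η*t))
      = (j.factorial : ℝ) / (η * ∏ i ∈ range (j+1), (c + i)) := by
  intro j
  induction j with
  | zero =>
    intro c hc
    simp only [pow_zero, one_mul, Nat.factorial_zero, Nat.cast_one]
    have hb : 0 < c * η := by positivity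
    have key := integral_comp_mul_left_Ioi (fun x => exp (-x)) 0 hb
    simp only [mul_zero, integral_exp_neg_Ioi_zero, smul_eq_mul, mul_one] at key
    have heq : (fun t : ℝ => exp (-(c*η*t))) = (fun t : ℝ => exp (-(c*η*t))) := rfl
    calc ∫ t in Ioi (0:ℝ), exp (-(c*η*t))
        = ∫ t in Ioi (0:ℝ), exp (-(c*η*t)) := rfl
      _ = (c*η)⁻¹ := by
          rw [← key]
      _ = 1 / (η * ∏ i ∈ range 1, (c + i)) := by
          rw [Finset.prod_range_one, Nat.cast_zero, add_zero, one_div, mul_comm η c]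
  | succ j ih =>
    intro c hc
    have hc1 : 0 < c + 1 := by linarith
    have hsplit : ∀ t : ℝ, (1 - exp (-(η*t)))^(j+1) * exp (-(c*η*t))
        = (1 - exp (-(η*t)))^j * exp (-(c*η*t))
          - (1 - exp (-(η*t)))^j * exp (-((c+1)*η*t)) := by
      intro t
      have he : exp (-((c+1)*η*t)) = exp (-(η*t)) * exp (-(c*η*t)) := by
        rw [← Real.exp_add]; ring_nf
      rw [pow_succ, he]; ring
    rw [setIntegral_congr_fun measurableSet_Ioi (fun t _ => hsplit t),
      integral_sub (J_integrable hη j hc) (J_integrable hη j hc1),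
      ih hc, ih hc1]
    have hA : (0:ℝ) < ∏ i ∈ range (j+1), (c + i) := by
      apply Finset.prod_pos; intro i _; positivity
    have hB : (0:ℝ) < ∏ i ∈ range (j+1), (c + 1 + i) := by
      apply Finset.prod_pos; intro i _; positivity
    have hrel : c * ∏ i ∈ range (j+1), (c + 1 + i) = ∏ i ∈ range (j+2), (c + i) := by
      rw [Finset.prod_range_succ' (fun i => c + i) (j+1)]
      simp only [Nat.cast_add, Nat.cast_one, Nat.cast_zero, add_zero]
      rw [mul_comm]
      congr 1
      apply Finset.prod_congr rfl
      intro i _; push_cast; ring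
    have hlast : ∏ i ∈ range (j+1+1), (c + i) = (∏ i ∈ range (j+1), (c + i)) * (c + j + 1) := by
      rw [Finset.prod_range_succ]; push_cast; ring
    have hfact : ((j+1).factorial : ℝ) = (j.factorial : ℝ) * (j+1) := by
      rw [Nat.factorial_succ]; push_cast; ring
    rw [hfact]
    have hAB : ∏ i ∈ range (j+1), (c + 1 + i) = (∏ i ∈ range (j+1), (c + i)) * (c + j + 1) / c := by
      rw [eq_div_iff hc.ne', mul_comm, hrel, hlast]
    rw [hlast, hAB]
    have h1 : c + (j:ℝ) + 1 ≠ 0 := by positivity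
    field_simp
    ring

variable {Ω : Type*} [MeasurableSpace Ω] (P : Measure Ω) [IsProbabilityMeasure P]

lemma expMeasure_Iic {η : ℝ} (hη : 0 < η) (t : ℝ) :
    expMeasure η (Iic t) = ENNReal.ofReal (if 0 ≤ t then 1 - exp (-(η * t)) else 0) := by
  rw [expMeasure, gammaMeasure, withDensity_apply _ measurableSet_Iic]
  exact lintegral_exponentialPDF_eq_antiDeriv hη t

lemma marg_Iic {η : ℝ} (hη : 0 < η) {X : Ω → ℝ} (hX : Measurable X)
    (hd : P.map X = expMeasure η) {t : ℝ} (ht : 0 ≤ t) :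
    P (X ⁻¹' Iic t) = ENNReal.ofReal (1 - exp (-(η * t))) := by
  rw [← Measure.map_apply hX measurableSet_Iic, hd, expMeasure_Iic hη, if_pos ht]

lemma marg_Ioi {η : ℝ} (hη : 0 < η) {X : Ω → ℝ} (hX : Measurable X)
    (hd : P.map X = expMeasure η) {t : ℝ} (ht : 0 ≤ t) :
    P (X ⁻¹' Ioi t) = ENNReal.ofReal (exp (-(η * t))) := by
  have h1 : X ⁻¹' Ioi t = (X ⁻¹' Iic t)ᶜ := by ext ω; simp [not_le]
  rw [h1, measure_compl (hX measurableSet_Iic) (measure_ne_top _ _),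
    marg_Iic P hη hX hd ht, measure_univ]
  have he : exp (-(η * t)) ≤ 1 := exp_le_one_iff.mpr (by nlinarith)
  have he' : (0:ℝ) ≤ exp (-(η * t)) := le_of_lt (exp_pos _)
  have h2 : ENNReal.ofReal (rexp (-(η*t))) ≤ 1 := by
    rw [← ENNReal.ofReal_one]; exact ENNReal.ofReal_le_ofReal he
  rw [ENNReal.ofReal_sub _ he', ENNReal.ofReal_one,
    ENNReal.sub_sub_cancel ENNReal.one_ne_top h2]

lemma marg_nonneg {η : ℝ} (hη : 0 < η) {X : Ω → ℝ} (hX : Measurable X)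
    (hd : P.map X = expMeasure η) : ∀ᵐ ω ∂P, 0 ≤ X ω := by
  rw [ae_iff]
  have : {ω | ¬ 0 ≤ X ω} = X ⁻¹' Iio 0 := by ext ω; simp [not_le]
  rw [this, ← Measure.map_apply hX measurableSet_Iio, hd, expMeasure, gammaMeasure,
    withDensity_apply _ measurableSet_Iio]
  exact lintegral_gammaPDF_of_nonpos le_rfl

lemma survival_eq {K : ℕ} (η : ℝ) (hη : 0 < η) (lam : Fin K → Ω → ℝ)
    (hmeas : ∀ k, Measurable (lam k))
    (hindep : iIndepFun lam P)
    (hdist : ∀ k, P.map (lam k) = expMeasure η)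
    {q : ℕ} (hq1 : 1 ≤ q) (hqK : q ≤ K) {t : ℝ} (ht : 0 ≤ t) :
    P {ω | t < orderStat (fun k => lam k ω) q}
      = ∑ j ∈ range q, (K.choose j) •
          (ENNReal.ofReal (1 - exp (-(η*t)))^j * ENNReal.ofReal (exp (-(η*t)))^(K-j)) := by
  classical
  set E : Finset (Fin K) → Set Ω :=
    fun A => ⋂ i, lam i ⁻¹' (if i ∈ A then Iic t else Ioi t) with hE
  have hEeq : ∀ A, E A = {ω | Finset.univ.filter (fun i => lam i ω ≤ t) = A} := by
    intro A
    ext ω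
    simp only [hE, Set.mem_iInter, Set.mem_preimage, Set.mem_setOf_eq, Finset.ext_iff,
      Finset.mem_filter, Finset.mem_univ, true_and]
    constructor
    · intro h i
      have := h i
      by_cases hiA : i ∈ A
      · simp only [if_pos hiA, Set.mem_Iic] at this; exact ⟨fun _ => hiA, fun _ => this⟩
      · simp only [if_neg hiA, Set.mem_Ioi] at this
        exact ⟨fun hle => absurd hle (not_le.mpr this), fun h' => absurd h' hiA⟩
    · intro h i
      by_cases hiA : i ∈ A
      · simp only [if_pos hiA, Set.mem_Iic]; exact (h i).mpr hiA
      · simp only [if_neg hiA, Set.mem_Ioi]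
        exact lt_of_not_ge (fun hle => hiA ((h i).mp hle))
  have hEmeas : ∀ A, MeasurableSet (E A) := by
    intro A
    refine MeasurableSet.iInter fun i => (hmeas i) ?_
    split <;> [exact measurableSet_Iic; exact measurableSet_Ioi]
  set 𝒜 : Finset (Finset (Fin K)) :=
    Finset.univ.powerset.filter (fun A => A.card < q) with h𝒜
  have hev : {ω | t < orderStat (fun k => lam k ω) q} = ⋃ A ∈ 𝒜, E A := by
    ext ω
    simp only [Set.mem_setOf_eq, Set.mem_iUnion, h𝒜, Finset.mem_filter,
      Finset.mem_powerset, hEeq, exists_prop]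
    rw [← not_le, orderStat_le_iff _ hq1 hqK, not_le]
    constructor
    · intro h
      exact ⟨Finset.univ.filter (fun i => lam i ω ≤ t), ⟨Finset.subset_univ _, h⟩, rfl⟩
    · rintro ⟨A, ⟨-, hcard⟩, rfl⟩
      exact hcard
  have hdisj : (↑𝒜 : Set (Finset (Fin K))).PairwiseDisjoint E := by
    intro A _ B _ hAB
    rw [Function.onFun, Set.disjoint_left]
    intro ω hA hB
    rw [hEeq] at hA hB
    exact hAB (hA.symm.trans hB)
  have hPE : ∀ A : Finset (Fin K), P (E A)
      = ENNReal.ofReal (1 - exp (-(η*t)))^A.card * ENNReal.ofReal (exp (-(η*t)))^(K - A.card) := by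
    intro A
    have := hindep.measure_inter_preimage_eq_mul Finset.univ
      (sets := fun i => if i ∈ A then Iic t else Ioi t)
      (fun i _ => by by_cases h : i ∈ A <;> simp [h])
    have hiInter : (⋂ i ∈ Finset.univ, lam i ⁻¹' (if i ∈ A then Iic t else Ioi t)) = E A := by
      simp [hE]
    rw [hiInter] at this
    rw [this]
    have hfact : ∀ i : Fin K, P (lam i ⁻¹' (if i ∈ A then Iic t else Ioi t))
        = if i ∈ A then ENNReal.ofReal (1 - exp (-(η*t))) else ENNReal.ofReal (exp (-(η*t))) := by
      intro i
      split
      · exact marg_Iic P hη (hmeas i) (hdist i) ht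
      · exact marg_Ioi P hη (hmeas i) (hdist i) ht
    rw [Finset.prod_congr rfl (fun i _ => hfact i), Finset.prod_ite, Finset.prod_const,
      Finset.prod_const]
    congr 2
    · simp
    · have hc : Finset.univ.filter (fun x => x ∉ A) = Aᶜ := by ext i; simp
      rw [hc, Finset.card_compl, Fintype.card_fin]
  rw [hev, measure_biUnion_finset hdisj (fun A _ => hEmeas A)]
  rw [Finset.sum_congr rfl (fun A _ => hPE A)]
  rw [h𝒜, Finset.sum_filter, Finset.sum_powerset]
  have hstep : ∀ j ∈ Finset.range (K + 1),
      (∑ A ∈ Finset.powersetCard j (Finset.univ : Finset (Fin K)),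
        if A.card < q then ENNReal.ofReal (1 - exp (-(η*t)))^A.card
          * ENNReal.ofReal (exp (-(η*t)))^(K - A.card) else 0)
      = if j < q then (K.choose j) •
          (ENNReal.ofReal (1 - exp (-(η*t)))^j * ENNReal.ofReal (exp (-(η*t)))^(K-j)) else 0 := by
    intro j _
    rw [Finset.sum_congr rfl (fun A hA => by
      rw [(Finset.mem_powersetCard.mp hA).2])]
    rw [Finset.sum_const, Finset.card_powersetCard, Finset.card_univ, Fintype.card_fin]
    split <;> simp
  rw [Finset.card_univ, Fintype.card_fin]
  rw [Finset.sum_congr rfl hstep]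
  rw [← Finset.sum_filter]
  congr 1
  ext j
  simp only [Finset.mem_filter, Finset.mem_range]
  omega

lemma orderStat_measurable {K : ℕ} (lam : Fin K → Ω → ℝ) (hmeas : ∀ k, Measurable (lam k))
    {q : ℕ} (hq1 : 1 ≤ q) (hqK : q ≤ K) :
    Measurable (fun ω => orderStat (fun k => lam k ω) q) := by
  apply measurable_of_Iic
  intro t
  have hset : (fun ω => orderStat (fun k => lam k ω) q) ⁻¹' Iic t
      = ⋃ A ∈ Finset.univ.powerset.filter (fun A : Finset (Fin K) => q ≤ A.card),
          ⋂ i, lam i ⁻¹' (if i ∈ A then Iic t else Ioi t) := by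
    ext ω
    simp only [Set.mem_preimage, Set.mem_Iic, Set.mem_iUnion, Set.mem_iInter,
      Finset.mem_filter, Finset.mem_powerset, exists_prop]
    rw [orderStat_le_iff _ hq1 hqK]
    constructor
    · intro h
      refine ⟨Finset.univ.filter (fun i => lam i ω ≤ t), ⟨Finset.subset_univ _, h⟩, ?_⟩
      intro i
      by_cases hi : lam i ω ≤ t
      · rw [if_pos (by simp [hi])]; exact hi
      · rw [if_neg (by simp [hi])]; exact lt_of_not_ge hi
    · rintro ⟨A, ⟨-, hcard⟩, hA⟩
      refine le_trans hcard (Finset.card_le_card ?_)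
      intro i hi
      have h2 := hA i
      rw [if_pos hi] at h2
      simp only [Set.mem_preimage, Set.mem_Iic] at h2
      simp [h2]
  rw [hset]
  apply Set.Finite.measurableSet_biUnion (Finset.finite_toSet _)
  intro A _
  refine MeasurableSet.iInter fun i => (hmeas i) ?_
  by_cases h : i ∈ A <;> simp [h]

lemma lintegral_orderStat {K : ℕ} (η : ℝ) (hη : 0 < η) (lam : Fin K → Ω → ℝ)
    (hmeas : ∀ k, Measurable (lam k))
    (hindep : iIndepFun lam P)
    (hdist : ∀ k, P.map (lam k) = expMeasure η)
    {q : ℕ} (hq1 : 1 ≤ q) (hqK : q ≤ K) :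
    ∫⁻ ω, ENNReal.ofReal (orderStat (fun k => lam k ω) q) ∂P
      = ENNReal.ofReal (((harmonic K : ℝ) - (harmonic (K - q) : ℝ)) / η) := by
  have hnn : ∀ᵐ ω ∂P, 0 ≤ orderStat (fun k => lam k ω) q := by
    have h1 : ∀ᵐ ω ∂P, ∀ k, 0 ≤ lam k ω :=
      (ae_all_iff).mpr (fun k => marg_nonneg P hη (hmeas k) (hdist k))
    filter_upwards [h1] with ω hω
    obtain ⟨k, hk⟩ := orderStat_mem (fun k => lam k ω) hq1 hqK
    rw [hk]; exact hω k
  rw [lintegral_eq_lintegral_meas_lt P hnn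
    (orderStat_measurable lam hmeas hq1 hqK).aemeasurable]
  have hcongr : ∫⁻ t in Ioi (0:ℝ), P {ω | t < orderStat (fun k => lam k ω) q}
      = ∫⁻ t in Ioi (0:ℝ), ∑ j ∈ range q, (K.choose j) •
          (ENNReal.ofReal (1 - exp (-(η*t)))^j * ENNReal.ofReal (exp (-(η*t)))^(K-j)) := by
    apply setLIntegral_congr_fun measurableSet_Ioi
    intro t ht
    exact survival_eq P η hη lam hmeas hindep hdist hq1 hqK (le_of_lt ht)
  rw [hcongr]
  simp only [nsmul_eq_mul]
  have hm1 : Measurable fun t : ℝ => ENNReal.ofReal (1 - exp (-(η*t))) :=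
    ENNReal.measurable_ofReal.comp (Continuous.measurable (by continuity))
  have hm2 : Measurable fun t : ℝ => ENNReal.ofReal (exp (-(η*t))) :=
    ENNReal.measurable_ofReal.comp (Continuous.measurable (by continuity))
  rw [lintegral_finset_sum _ (fun j _ =>
    (show Measurable (fun t : ℝ => (K.choose j : ℝ≥0∞) * (ENNReal.ofReal (1 - exp (-(η*t)))^j
      * ENNReal.ofReal (exp (-(η*t)))^(K-j))) from
    measurable_const.mul ((hm1.pow_const j).mul (hm2.pow_const (K-j)))))]
  have hterm : ∀ j ∈ range q, (∫⁻ t in Ioi (0:ℝ),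
      (K.choose j : ℝ≥0∞) * (ENNReal.ofReal (1 - exp (-(η*t)))^j
        * ENNReal.ofReal (exp (-(η*t)))^(K-j)))
      = ENNReal.ofReal (1 / (((K-j:ℕ):ℝ) * η)) := by
    intro j hj
    have hjK : j < K := lt_of_lt_of_le (Finset.mem_range.mp hj) hqK
    have hc : (0:ℝ) < ((K-j:ℕ):ℝ) := by
      have : 0 < K - j := by omega
      exact_mod_cast this
    rw [lintegral_const_mul _ (show Measurable (fun t : ℝ => ENNReal.ofReal (1 - exp (-(η*t)))^j
      * ENNReal.ofReal (exp (-(η*t)))^(K-j)) from (hm1.pow_const j).mul (hm2.pow_const (K-j)))]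
    have hin : ∀ t ∈ Ioi (0:ℝ),
        ENNReal.ofReal (1 - exp (-(η*t)))^j * ENNReal.ofReal (exp (-(η*t)))^(K-j)
        = ENNReal.ofReal ((1 - exp (-(η*t)))^j * exp (-(((K-j:ℕ):ℝ)*η*t))) := by
      intro t ht
      rw [Set.mem_Ioi] at ht
      have h1 : (0:ℝ) ≤ 1 - exp (-(η*t)) := by
        have : exp (-(η*t)) ≤ 1 := exp_le_one_iff.mpr (by nlinarith)
        linarith
      rw [← ENNReal.ofReal_pow h1, ← ENNReal.ofReal_pow (exp_pos _).le,
        ← ENNReal.ofReal_mul (pow_nonneg h1 _)]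
      congr 2
      rw [← Real.exp_nat_mul]
      congr 1
      ring
    rw [setLIntegral_congr_fun measurableSet_Ioi hin]
    have hnn2 : 0 ≤ᵐ[volume.restrict (Ioi (0:ℝ))]
        fun t => (1 - exp (-(η*t)))^j * exp (-(((K-j:ℕ):ℝ)*η*t)) := by
      filter_upwards [ae_restrict_mem measurableSet_Ioi] with t ht
      rw [Set.mem_Ioi] at ht
      have h1 : (0:ℝ) ≤ 1 - exp (-(η*t)) := by
        have : exp (-(η*t)) ≤ 1 := exp_le_one_iff.mpr (by nlinarith)
        linarith
      positivity
    rw [← ofReal_integral_eq_lintegral_ofReal (J_integrable hη j hc) hnn2]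
    rw [J_eq hη j hc, ← ENNReal.ofReal_natCast, ← ENNReal.ofReal_mul (Nat.cast_nonneg _),
      comb_real hjK η hη]
  rw [Finset.sum_congr rfl hterm]
  rw [← ENNReal.ofReal_sum_of_nonneg (fun j _ => by positivity)]
  congr 1
  have : ∀ j ∈ range q, 1 / (((K-j:ℕ):ℝ) * η) = (1 / ((K-j:ℕ):ℝ)) / η :=
    fun j _ => (div_div 1 ((K-j:ℕ):ℝ) η).symm
  rw [Finset.sum_congr rfl this, ← Finset.sum_div, ← harmonic_diff hqK]

lemma integral_orderStat {K : ℕ} (η : ℝ) (hη : 0 < η) (lam : Fin K → Ω → ℝ)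
    (hmeas : ∀ k, Measurable (lam k))
    (hindep : iIndepFun lam P)
    (hdist : ∀ k, P.map (lam k) = expMeasure η)
    {q : ℕ} (hq1 : 1 ≤ q) (hqK : q ≤ K) :
    Integrable (fun ω => orderStat (fun k => lam k ω) q) P ∧
    ∫ ω, orderStat (fun k => lam k ω) q ∂P
      = ((harmonic K : ℝ) - (harmonic (K - q) : ℝ)) / η := by
  have hmeasX := orderStat_measurable lam hmeas hq1 hqK
  have hnn : ∀ᵐ ω ∂P, 0 ≤ orderStat (fun k => lam k ω) q := by
    have h1 : ∀ᵐ ω ∂P, ∀ k, 0 ≤ lam k ω :=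
      (ae_all_iff).mpr (fun k => marg_nonneg P hη (hmeas k) (hdist k))
    filter_upwards [h1] with ω hω
    obtain ⟨k, hk⟩ := orderStat_mem (fun k => lam k ω) hq1 hqK
    rw [hk]; exact hω k
  have hlin := lintegral_orderStat P η hη lam hmeas hindep hdist hq1 hqK
  have hSnn : 0 ≤ ((harmonic K : ℝ) - (harmonic (K - q) : ℝ)) / η := by
    rw [harmonic_diff hqK]
    apply div_nonneg _ hη.le
    apply Finset.sum_nonneg
    intro j _
    positivity
  have hint : Integrable (fun ω => orderStat (fun k => lam k ω) q) P := by
    refine ⟨hmeasX.aestronglyMeasurable, ?_⟩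
    rw [hasFiniteIntegral_iff_ofReal hnn, hlin]
    exact ENNReal.ofReal_lt_top
  refine ⟨hint, ?_⟩
  rw [integral_eq_lintegral_of_nonneg_ae hnn hmeasX.aestronglyMeasurable, hlin,
    ENNReal.toReal_ofReal hSnn]

end Aux

/-- For the MDS-coded scheme, the computing phase lasts `λ_{⌈1/μ⌉:K} + τ·m·μ`; the
normalized computing delay is this divided by `τ`, the communication delay is `m`, and the
average total normalized latency equals `(H_K - H_{K-⌈1/μ⌉})/(η·τ) + m·(μ + γ)`. -/
theorem mds_total_latency
    {Ω : Type*} [MeasurableSpace Ω] (P : Measure Ω) [IsProbabilityMeasure P]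
    (K : ℕ) (hK : 1 ≤ K) (μ : ℝ) (hμ1 : 1 / (K : ℝ) ≤ μ) (hμ2 : μ ≤ 1)
    (m : ℕ) (hm : 1 ≤ m) (τ γ η : ℝ) (hτ : 0 < τ) (hγ : 0 ≤ γ) (hη : 0 < η)
    (lam : Fin K → Ω → ℝ)
    (hmeas : ∀ k, Measurable (lam k))
    (hindep : iIndepFun lam P)
    (hdist : ∀ k, P.map (lam k) = expMeasure η)
    (hq : ⌈1 / μ⌉₊ ≤ K) :
    (∫ ω, (orderStat (fun k => lam k ω) ⌈1 / μ⌉₊ + τ * ((m : ℝ) * μ)) / τ ∂P)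
        + γ * (m : ℝ)
      = ((harmonic K : ℝ) - (harmonic (K - ⌈1 / μ⌉₊) : ℝ)) / (η * τ)
        + (m : ℝ) * (μ + γ) := by
  
  have hK0 : (0:ℝ) < K := by exact_mod_cast hK
  have hμ0 : 0 < μ := lt_of_lt_of_le (by positivity) hμ1
  have hq1 : 1 ≤ ⌈1 / μ⌉₊ := Nat.one_le_iff_ne_zero.mpr (by
    intro h
    have := Nat.ceil_eq_zero.mp h
    have h2 : (0:ℝ) < 1 / μ := by positivity
    linarith)
  obtain ⟨hint, hval⟩ := integral_orderStat P η hη lam hmeas hindep hdist hq1 hq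
  have hsplit : (∫ ω, (orderStat (fun k => lam k ω) ⌈1 / μ⌉₊ + τ * ((m : ℝ) * μ)) / τ ∂P)
      = ∫ ω, (orderStat (fun k => lam k ω) ⌈1 / μ⌉₊ * τ⁻¹ + (m : ℝ) * μ) ∂P := by
    apply integral_congr_ae
    apply ae_of_all
    intro ω
    field_simp
  rw [hsplit, integral_add (hint.mul_const _) (integrable_const _), integral_mul_const,
    integral_const, probReal_univ, one_smul, hval]
  field_simp
  ring
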